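/- Define ᾱ = (1/4)(σ̂i σ̄c/(1−σ̂f))‖L_f W_y‖ + (1/4)σ̄c‖L_i W_y‖, β̄ = (1/4)(σ̂i σ̄c/(1−σ̂f))‖L_f‖ + (1/4)σ̄c‖L_i‖, γ̄ = (1/4)tanh(σ̂i σ̄c/(1−σ̂f)), and let L be the 3×3 matrix with rows (0, ᾱ, β̄), (0, γ̄‖L_o W_y‖ + σ̄o ᾱ, γ̄‖L_o‖ + σ̄o β̄), (0, ‖L_d W_y‖, ‖L_d‖), and set L_max = ‖L‖/√λ_min(P_o). Then for all u ∈ U, (c,h) ∈ X, d ∈ D and χ̂ = (ĉ,ĥ,d̂) ∈ Î, the observer update χ̂⁺ (computed with measured output y = W_y h + b_y + d) satisfies ‖χ̂⁺ − f_aug(χ̂, u)‖ ≤ L_max V_o(χ̂, χ), where f_aug(χ̂, u) = (f((ĉ,ĥ), u), d̂) is the disturbance-augmented LSTM update applied to the observer state and χ = (c,h,d). -/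

import Mathlib

open Matrix Filter Set
open scoped ENNReal NNReal BigOperators

noncomputable section

namespace LSTMmpc

/-- The logistic sigmoid `σ(z) = 1/(1+e^{-z})`. -/
def sigmoid (z : ℝ) : ℝ := 1 / (1 + Real.exp (-z))

/-- Euclidean norm of a finite real vector. -/
def enorm {k : ℕ} (v : Fin k → ℝ) : ℝ := Real.sqrt (∑ i, v i ^ 2)

/-- Sup (∞) norm of a finite real vector. -/
def vinf {k : ℕ} (v : Fin k → ℝ) : ℝ := ⨆ i, |v i|

/-- Spectral (ℓ²-induced) norm of a real matrix. -/
def spec {a b : ℕ} (M : Matrix (Fin a) (Fin b) ℝ) : ℝ :=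
  ⨆ v : {v : Fin b → ℝ // enorm v ≤ 1}, enorm (M.mulVec v.1)

/-- Induced ∞-norm (maximum absolute row sum) of the horizontal block `[s•A, B, v]`. -/
def rowNorm3 {n m : ℕ} (s : ℝ) (A : Matrix (Fin n) (Fin m) ℝ)
    (B : Matrix (Fin n) (Fin n) ℝ) (v : Fin n → ℝ) : ℝ :=
  ⨆ i, (∑ j, |s * A i j| + ∑ j, |B i j| + |v i|)

/-- Induced ∞-norm of the horizontal block `[s•A, B, v, C, t•D]`. -/
def rowNorm5 {n m p : ℕ} (s : ℝ) (A : Matrix (Fin n) (Fin m) ℝ)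
    (B : Matrix (Fin n) (Fin n) ℝ) (v : Fin n → ℝ)
    (C : Matrix (Fin n) (Fin n) ℝ) (t : ℝ) (D : Matrix (Fin n) (Fin p) ℝ) : ℝ :=
  ⨆ i, (∑ j, |s * A i j| + ∑ j, |B i j| + |v i| + ∑ j, |C i j| + ∑ j, |t * D i j|)

/-- Weighted norm `‖v‖_P = √(vᵀ P v)`. -/
def wnorm {k : ℕ} (P : Matrix (Fin k) (Fin k) ℝ) (v : Fin k → ℝ) : ℝ :=
  Real.sqrt (v ⬝ᵥ P.mulVec v)

/-- Minimum eigenvalue of a hermitian real matrix. -/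
def lamMin {k : ℕ} (P : Matrix (Fin k) (Fin k) ℝ) (hP : P.IsHermitian) : ℝ :=
  ⨅ i, hP.eigenvalues i

/-- Maximum eigenvalue of a hermitian real matrix. -/
def lamMax {k : ℕ} (P : Matrix (Fin k) (Fin k) ℝ) (hP : P.IsHermitian) : ℝ :=
  ⨆ i, hP.eigenvalues i

/-- Spectral radius (over `ℂ`) of a real square matrix. -/
def specRad {k : ℕ} (M : Matrix (Fin k) (Fin k) ℝ) : ℝ≥0∞ :=
  spectralRadius ℂ (M.map (fun x : ℝ => (x : ℂ)))

/-- Class `K∞` functions `[0,∞) → [0,∞)`. -/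
def IsClassKInf (γ : ℝ → ℝ) : Prop :=
  ContinuousOn γ (Set.Ici 0) ∧ γ 0 = 0 ∧ StrictMonoOn γ (Set.Ici 0) ∧
    (∀ s, 0 ≤ s → 0 ≤ γ s) ∧ Tendsto γ atTop atTop

/-- Class `KL` functions. -/
def IsClassKL (β : ℝ → ℕ → ℝ) : Prop :=
  (∀ k, ContinuousOn (fun s => β s k) (Set.Ici 0) ∧
      StrictMonoOn (fun s => β s k) (Set.Ici 0) ∧ β 0 k = 0) ∧
  (∀ s, 0 < s → StrictAnti (fun k => β s k) ∧ Tendsto (fun k => β s k) atTop (nhds 0)) ∧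
  (∀ s, 0 ≤ s → ∀ k, 0 ≤ β s k)

/-- Weights of an LSTM network. -/
structure LSTM (n m p : ℕ) where
  Wf : Matrix (Fin n) (Fin m) ℝ
  Wi : Matrix (Fin n) (Fin m) ℝ
  Wc : Matrix (Fin n) (Fin m) ℝ
  Wo : Matrix (Fin n) (Fin m) ℝ
  Uf : Matrix (Fin n) (Fin n) ℝ
  Ui : Matrix (Fin n) (Fin n) ℝ
  Uc : Matrix (Fin n) (Fin n) ℝ
  Uo : Matrix (Fin n) (Fin n) ℝ
  bf : Fin n → ℝ
  bi : Fin n → ℝ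
  bc : Fin n → ℝ
  bo : Fin n → ℝ
  Wy : Matrix (Fin p) (Fin n) ℝ
  bY : Fin p → ℝ

/-- LSTM state `(c, h)`. -/
abbrev State (n : ℕ) := (Fin n → ℝ) × (Fin n → ℝ)

/-- Augmented state `(c, h, d)`. -/
abbrev AugState (n p : ℕ) := (Fin n → ℝ) × (Fin n → ℝ) × (Fin p → ℝ)

variable {n m p : ℕ}

def stepC (S : LSTM n m p) (u : Fin m → ℝ) (c h : Fin n → ℝ) : Fin n → ℝ := fun j =>
  sigmoid ((S.Wf.mulVec u + S.Uf.mulVec h + S.bf) j) * c j +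
    sigmoid ((S.Wi.mulVec u + S.Ui.mulVec h + S.bi) j) *
      Real.tanh ((S.Wc.mulVec u + S.Uc.mulVec h + S.bc) j)

def stepH (S : LSTM n m p) (u : Fin m → ℝ) (c h : Fin n → ℝ) : Fin n → ℝ := fun j =>
  sigmoid ((S.Wo.mulVec u + S.Uo.mulVec h + S.bo) j) * Real.tanh (stepC S u c h j)

/-- One step of the LSTM dynamics `x⁺ = f(x, u)`. -/
def step (S : LSTM n m p) (x : State n) (u : Fin m → ℝ) : State n :=
  (stepC S u x.1 x.2, stepH S u x.1 x.2)

/-- Output map `g(x) = W_y h + b_y`. -/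
def out (S : LSTM n m p) (x : State n) : Fin p → ℝ := S.Wy.mulVec x.2 + S.bY

/-- LSTM trajectory. -/
def traj (S : LSTM n m p) (x0 : State n) (u : ℕ → Fin m → ℝ) : ℕ → State n
  | 0 => x0
  | k + 1 => step S (traj S x0 u k) (u k)

def sFb (S : LSTM n m p) (umax : ℝ) : ℝ := sigmoid (rowNorm3 umax S.Wf S.Uf S.bf)
def sIb (S : LSTM n m p) (umax : ℝ) : ℝ := sigmoid (rowNorm3 umax S.Wi S.Ui S.bi)
def sOb (S : LSTM n m p) (umax : ℝ) : ℝ := sigmoid (rowNorm3 umax S.Wo S.Uo S.bo)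
def sCb (S : LSTM n m p) (umax : ℝ) : ℝ := Real.tanh (rowNorm3 umax S.Wc S.Uc S.bc)
def sXb (S : LSTM n m p) (umax : ℝ) : ℝ :=
  Real.tanh (sIb S umax * sCb S umax / (1 - sFb S umax))
def alphaD (S : LSTM n m p) (umax : ℝ) : ℝ :=
  (1/4) * spec S.Uf * (sIb S umax * sCb S umax / (1 - sFb S umax)) +
    sIb S umax * spec S.Uc + (1/4) * spec S.Ui * sCb S umax
def betaD (S : LSTM n m p) (umax : ℝ) : ℝ :=
  (1/4) * spec S.Wf * (sIb S umax * sCb S umax / (1 - sFb S umax)) +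
    sIb S umax * spec S.Wc + (1/4) * spec S.Wi * sCb S umax
def Adelta (S : LSTM n m p) (umax : ℝ) : Matrix (Fin 2) (Fin 2) ℝ :=
  !![sFb S umax, alphaD S umax;
     sOb S umax * sFb S umax, alphaD S umax * sOb S umax + (1/4) * sXb S umax * spec S.Uo]
def Bdelta (S : LSTM n m p) (umax : ℝ) : Fin 2 → ℝ :=
  ![betaD S umax, betaD S umax * sOb S umax + (1/4) * sXb S umax * spec S.Wo]

def setU (m : ℕ) (umax : ℝ) : Set (Fin m → ℝ) := {u | vinf u ≤ umax}
def setH (n : ℕ) : Set (Fin n → ℝ) := {h | vinf h ≤ 1}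
def setC (S : LSTM n m p) (umax : ℝ) : Set (Fin n → ℝ) :=
  {c | vinf c ≤ sIb S umax * sCb S umax / (1 - sFb S umax)}
def setX (S : LSTM n m p) (umax : ℝ) : Set (State n) := (setC S umax) ×ˢ (setH n)
def setD (p : ℕ) (dmax : ℝ) : Set (Fin p → ℝ) := {d | vinf d ≤ dmax}

/-- Euclidean norm of the full state. -/
def xnorm {n : ℕ} (x : State n) : ℝ := Real.sqrt (∑ i, x.1 i ^ 2 + ∑ i, x.2 i ^ 2)

/-- Euclidean norm of the augmented state. -/
def chinorm {n p : ℕ} (χ : AugState n p) : ℝ :=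
  Real.sqrt (∑ i, χ.1 i ^ 2 + ∑ i, χ.2.1 i ^ 2 + ∑ i, χ.2.2 i ^ 2)

/-- Incremental input-to-state stability of the LSTM in `X` and `U`. -/
def deltaISS (S : LSTM n m p) (umax : ℝ) : Prop :=
  ∃ β γ, IsClassKL β ∧ IsClassKInf γ ∧
    ∀ (k : ℕ) (xa0 xb0 : State n), xa0 ∈ setX S umax → xb0 ∈ setX S umax →
      ∀ ua ub : ℕ → Fin m → ℝ,
        (∀ h < k, ua h ∈ setU m umax) → (∀ h < k, ub h ∈ setU m umax) →
        xnorm (traj S xa0 ua k - traj S xb0 ub k) ≤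
          β (xnorm (xa0 - xb0)) k + γ (⨆ h ∈ Finset.range k, enorm (ua h - ub h))

/-- Observer gains. -/
structure Gains (n p : ℕ) where
  Lf : Matrix (Fin n) (Fin p) ℝ
  Li : Matrix (Fin n) (Fin p) ℝ
  Lo : Matrix (Fin n) (Fin p) ℝ
  Ld : Matrix (Fin p) (Fin p) ℝ

/-- Componentwise saturation to `[-dmax, dmax]`. -/
def sat {p : ℕ} (dmax : ℝ) (v : Fin p → ℝ) : Fin p → ℝ := fun j =>
  min (max (v j) (-dmax)) dmax

/-- Observer output `ŷ = W_y ĥ + b_y + d̂`. -/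
def yhat (S : LSTM n m p) (hh : Fin n → ℝ) (dh : Fin p → ℝ) : Fin p → ℝ :=
  S.Wy.mulVec hh + S.bY + dh

def obsC (S : LSTM n m p) (G : Gains n p) (u : Fin m → ℝ) (y : Fin p → ℝ)
    (ch hh : Fin n → ℝ) (dh : Fin p → ℝ) : Fin n → ℝ := fun j =>
  sigmoid ((S.Wf.mulVec u + S.Uf.mulVec hh + S.bf + G.Lf.mulVec (y - yhat S hh dh)) j) * ch j +
    sigmoid ((S.Wi.mulVec u + S.Ui.mulVec hh + S.bi + G.Li.mulVec (y - yhat S hh dh)) j) *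
      Real.tanh ((S.Wc.mulVec u + S.Uc.mulVec hh + S.bc) j)

def obsH (S : LSTM n m p) (G : Gains n p) (u : Fin m → ℝ) (y : Fin p → ℝ)
    (ch hh : Fin n → ℝ) (dh : Fin p → ℝ) : Fin n → ℝ := fun j =>
  sigmoid ((S.Wo.mulVec u + S.Uo.mulVec hh + S.bo + G.Lo.mulVec (y - yhat S hh dh)) j) *
    Real.tanh (obsC S G u y ch hh dh j)

def obsD (S : LSTM n m p) (G : Gains n p) (dmax : ℝ) (y : Fin p → ℝ)
    (hh : Fin n → ℝ) (dh : Fin p → ℝ) : Fin p → ℝ :=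
  sat dmax (dh + G.Ld.mulVec (y - yhat S hh dh))

/-- One step of the observer. -/
def obsStep (S : LSTM n m p) (G : Gains n p) (dmax : ℝ) (u : Fin m → ℝ) (y : Fin p → ℝ)
    (χ : AugState n p) : AugState n p :=
  (obsC S G u y χ.1 χ.2.1 χ.2.2, obsH S G u y χ.1 χ.2.1 χ.2.2, obsD S G dmax y χ.2.1 χ.2.2)

/-- Observer trajectory. -/
def obsTraj (S : LSTM n m p) (G : Gains n p) (dmax : ℝ) (u : ℕ → Fin m → ℝ)
    (y : ℕ → Fin p → ℝ) (χ0 : AugState n p) : ℕ → AugState n p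
  | 0 => χ0
  | k + 1 => obsStep S G dmax (u k) (y k) (obsTraj S G dmax u y χ0 k)

def sFh (S : LSTM n m p) (G : Gains n p) (umax dmax : ℝ) : ℝ :=
  sigmoid (rowNorm5 umax S.Wf (S.Uf - G.Lf * S.Wy) S.bf (G.Lf * S.Wy) (2 * dmax) G.Lf)
def sIh (S : LSTM n m p) (G : Gains n p) (umax dmax : ℝ) : ℝ :=
  sigmoid (rowNorm5 umax S.Wi (S.Ui - G.Li * S.Wy) S.bi (G.Li * S.Wy) (2 * dmax) G.Li)
def sOh (S : LSTM n m p) (G : Gains n p) (umax dmax : ℝ) : ℝ :=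
  sigmoid (rowNorm5 umax S.Wo (S.Uo - G.Lo * S.Wy) S.bo (G.Lo * S.Wy) (2 * dmax) G.Lo)
def alphaH (S : LSTM n m p) (G : Gains n p) (umax : ℝ) : ℝ :=
  (1/4) * (sIb S umax * sCb S umax / (1 - sFb S umax)) * spec (S.Uf - G.Lf * S.Wy) +
    sIb S umax * spec S.Uc + (1/4) * sCb S umax * spec (S.Ui - G.Li * S.Wy)
def betaH (S : LSTM n m p) (G : Gains n p) (umax : ℝ) : ℝ :=
  (1/4) * (sIb S umax * sCb S umax / (1 - sFb S umax)) * spec G.Lf +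
    (1/4) * sCb S umax * spec G.Li
def gammaH (S : LSTM n m p) (G : Gains n p) (umax dmax : ℝ) : ℝ :=
  sOh S G umax dmax * alphaH S G umax + (1/4) * sXb S umax * spec (S.Uo - G.Lo * S.Wy)
def Ad (S : LSTM n m p) (G : Gains n p) (umax dmax : ℝ) : Matrix (Fin 3) (Fin 3) ℝ :=
  !![sFh S G umax dmax, alphaH S G umax, betaH S G umax;
     sOh S G umax dmax * sFh S G umax dmax, gammaH S G umax dmax,
       sOh S G umax dmax * betaH S G umax + (1/4) * sXb S umax * spec G.Lo;
     0, spec (G.Ld * S.Wy), spec ((1 : Matrix (Fin p) (Fin p) ℝ) - G.Ld)]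

def setChat (S : LSTM n m p) (G : Gains n p) (umax dmax : ℝ) : Set (Fin n → ℝ) :=
  {c | vinf c ≤ sIh S G umax dmax * sCb S umax / (1 - sFh S G umax dmax)}
def setIhat (S : LSTM n m p) (G : Gains n p) (umax dmax : ℝ) : Set (AugState n p) :=
  (setChat S G umax dmax) ×ˢ ((setH n) ×ˢ (setD p dmax))

/-- Incremental Lyapunov function for the LSTM. -/
def Vs {n : ℕ} (Ps : Matrix (Fin 2) (Fin 2) ℝ) (xa xb : State n) : ℝ :=
  wnorm Ps ![enorm (xa.1 - xb.1), enorm (xa.2 - xb.2)]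

/-- Lyapunov function for the observer estimation error. -/
def Vo {n p : ℕ} (Po : Matrix (Fin 3) (Fin 3) ℝ) (χh χ : AugState n p) : ℝ :=
  wnorm Po ![enorm (χh.1 - χ.1), enorm (χh.2.1 - χ.2.1), enorm (χh.2.2 - χ.2.2)]

/-- Disturbance-augmented LSTM update applied to the observer state. -/
def faug (S : LSTM n m p) (χ : AugState n p) (u : Fin m → ℝ) : AugState n p :=
  (stepC S u χ.1 χ.2.1, stepH S u χ.1 χ.2.1, χ.2.2)

def alphaBar (S : LSTM n m p) (G : Gains n p) (umax dmax : ℝ) : ℝ :=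
  (1/4) * (sIh S G umax dmax * sCb S umax / (1 - sFh S G umax dmax)) * spec (G.Lf * S.Wy) +
    (1/4) * sCb S umax * spec (G.Li * S.Wy)
def betaBar (S : LSTM n m p) (G : Gains n p) (umax dmax : ℝ) : ℝ :=
  (1/4) * (sIh S G umax dmax * sCb S umax / (1 - sFh S G umax dmax)) * spec G.Lf +
    (1/4) * sCb S umax * spec G.Li
def gammaBar (S : LSTM n m p) (G : Gains n p) (umax dmax : ℝ) : ℝ :=
  (1/4) * Real.tanh (sIh S G umax dmax * sCb S umax / (1 - sFh S G umax dmax))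
def Lmat (S : LSTM n m p) (G : Gains n p) (umax dmax : ℝ) : Matrix (Fin 3) (Fin 3) ℝ :=
  !![0, alphaBar S G umax dmax, betaBar S G umax dmax;
     0, gammaBar S G umax dmax * spec (G.Lo * S.Wy) + sOb S umax * alphaBar S G umax dmax,
       gammaBar S G umax dmax * spec G.Lo + sOb S umax * betaBar S G umax dmax;
     0, spec (G.Ld * S.Wy), spec G.Ld]



/-! ### Auxiliary lemmas for statement10 -/

section Aux

lemma one_add_exp_pos' (z : ℝ) : 0 < 1 + Real.exp z := by positivity

lemma sigmoid_pos' (z : ℝ) : 0 < sigmoid z := by unfold sigmoid; positivity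

lemma sigmoid_lt_one' (z : ℝ) : sigmoid z < 1 := by
  unfold sigmoid
  rw [div_lt_one (one_add_exp_pos' _)]
  linarith [Real.exp_pos (-z)]

lemma sigmoid_mono' : Monotone sigmoid := by
  intro a b hab
  unfold sigmoid
  apply div_le_div_of_nonneg_left one_pos.le (one_add_exp_pos' _)
  have := Real.exp_le_exp.2 (neg_le_neg hab)
  linarith

lemma hasDerivAt_sigmoid (z : ℝ) :
    HasDerivAt sigmoid (Real.exp (-z) / (1 + Real.exp (-z))^2) z := by
  have h1 : HasDerivAt (fun z : ℝ => 1 + Real.exp (-z)) (-Real.exp (-z)) z := by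
    simpa using (((Real.hasDerivAt_exp (-z)).comp z ((hasDerivAt_id z).neg)).const_add 1)
  have h2 : HasDerivAt (fun z : ℝ => (1 + Real.exp (-z))⁻¹)
      (Real.exp (-z) / (1 + Real.exp (-z))^2) z := by
    have := h1.inv (by positivity); simp only [neg_neg] at this; exact this
  unfold sigmoid
  simpa [one_div] using h2

lemma sigmoid_lipschitz (a b : ℝ) : |sigmoid a - sigmoid b| ≤ (1/4) * |a - b| := by
  have hL : LipschitzWith (1/4 : ℝ≥0) sigmoid := by
    apply lipschitzWith_of_nnnorm_deriv_le
      (fun x => (hasDerivAt_sigmoid x).differentiableAt)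
    intro x
    have hd : deriv sigmoid x = Real.exp (-x) / (1 + Real.exp (-x))^2 :=
      (hasDerivAt_sigmoid x).deriv
    rw [← NNReal.coe_le_coe, coe_nnnorm, Real.norm_eq_abs, hd]
    have ht : (0:ℝ) < Real.exp (-x) := Real.exp_pos _
    rw [abs_of_nonneg (by positivity), div_le_iff₀ (by positivity)]
    push_cast
    nlinarith [sq_nonneg (1 - Real.exp (-x))]
  have := hL.dist_le_mul a b
  rw [Real.dist_eq, Real.dist_eq] at this
  calc |sigmoid a - sigmoid b| ≤ ((1/4 : ℝ≥0) : ℝ) * |a - b| := this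
  _ = (1/4) * |a - b| := by norm_num

lemma hasDerivAt_tanh (z : ℝ) : HasDerivAt Real.tanh (1 / Real.cosh z ^ 2) z := by
  have h : HasDerivAt (fun z => Real.sinh z / Real.cosh z)
      ((Real.cosh z * Real.cosh z - Real.sinh z * Real.sinh z) / Real.cosh z ^ 2) z :=
    (Real.hasDerivAt_sinh z).div (Real.hasDerivAt_cosh z) (Real.cosh_pos z).ne'
  have e : (Real.cosh z * Real.cosh z - Real.sinh z * Real.sinh z) = 1 := by
    have := Real.cosh_sq z; nlinarith
  rw [e] at h
  exact h.congr_of_eventuallyEq (by filter_upwards with x using (Real.tanh_eq_sinh_div_cosh x))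

lemma tanh_lipschitz (a b : ℝ) : |Real.tanh a - Real.tanh b| ≤ |a - b| := by
  have hL : LipschitzWith 1 Real.tanh := by
    apply lipschitzWith_of_nnnorm_deriv_le
      (fun x => (hasDerivAt_tanh x).differentiableAt)
    intro x
    have hd : deriv Real.tanh x = 1 / Real.cosh x ^ 2 := (hasDerivAt_tanh x).deriv
    rw [← NNReal.coe_le_coe, coe_nnnorm, Real.norm_eq_abs, hd]
    have h1 := Real.one_le_cosh x
    rw [abs_of_nonneg (by positivity)]
    push_cast
    rw [div_le_one (by positivity)]
    nlinarith
  have := hL.dist_le_mul a b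
  rw [Real.dist_eq, Real.dist_eq] at this
  simpa using this

lemma tanh_strictMono : StrictMono Real.tanh :=
  strictMono_of_deriv_pos (fun x => by rw [(hasDerivAt_tanh x).deriv]; positivity)

lemma tanh_mono' : Monotone Real.tanh := tanh_strictMono.monotone

lemma tanh_nonneg' {x : ℝ} (hx : 0 ≤ x) : 0 ≤ Real.tanh x := by
  have := tanh_mono' hx
  simpa [Real.tanh_eq_sinh_div_cosh, Real.sinh_zero] using this

lemma abs_tanh (x : ℝ) : |Real.tanh x| = Real.tanh |x| := by
  rcases le_or_gt 0 x with hx | hx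
  · rw [abs_of_nonneg hx, abs_of_nonneg (tanh_nonneg' hx)]
  · have h0 : Real.tanh x < 0 := by
      have := tanh_strictMono hx
      simpa [Real.tanh_eq_sinh_div_cosh, Real.sinh_zero] using this
    rw [abs_of_neg hx, Real.tanh_neg, abs_of_neg h0]

lemma abs_tanh_le {x R : ℝ} (h : |x| ≤ R) : |Real.tanh x| ≤ Real.tanh R := by
  rw [abs_tanh]; exact tanh_mono' h

lemma sigmoid_abs_le {x R : ℝ} (h : |x| ≤ R) : sigmoid x ≤ sigmoid R :=
  sigmoid_mono' ((le_abs_self x).trans h)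

lemma enorm_nonneg' {k : ℕ} (v : Fin k → ℝ) : 0 ≤ enorm v := Real.sqrt_nonneg _

lemma enorm_sq' {k : ℕ} (v : Fin k → ℝ) : enorm v ^ 2 = ∑ i, v i ^ 2 :=
  Real.sq_sqrt (Finset.sum_nonneg fun i _ => sq_nonneg _)

lemma enorm_eq_norm {k : ℕ} (v : Fin k → ℝ) :
    enorm v = ‖(WithLp.equiv 2 (Fin k → ℝ)).symm v‖ := by
  rw [EuclideanSpace.norm_eq]
  simp [enorm, sq_abs]

lemma enorm_zero' {k : ℕ} : enorm (0 : Fin k → ℝ) = 0 := by simp [enorm]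

lemma enorm_mono {k : ℕ} {a b : Fin k → ℝ} (h : ∀ i, |a i| ≤ b i) :
    enorm a ≤ enorm b := by
  apply Real.sqrt_le_sqrt
  apply Finset.sum_le_sum
  intro i _
  have := h i
  nlinarith [abs_nonneg (a i), sq_abs (a i)]

lemma enorm_abs {k : ℕ} (v : Fin k → ℝ) : enorm (fun i => |v i|) = enorm v := by
  simp [enorm, sq_abs]

lemma enorm_add_le {k : ℕ} (a b : Fin k → ℝ) : enorm (a + b) ≤ enorm a + enorm b := by
  rw [enorm_eq_norm, enorm_eq_norm, enorm_eq_norm]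
  rw [show (WithLp.equiv 2 (Fin k → ℝ)).symm (a + b) =
    (WithLp.equiv 2 (Fin k → ℝ)).symm a + (WithLp.equiv 2 (Fin k → ℝ)).symm b from rfl]
  exact norm_add_le _ _

lemma enorm_smul' {k : ℕ} (t : ℝ) (v : Fin k → ℝ) : enorm (t • v) = |t| * enorm v := by
  rw [enorm_eq_norm, enorm_eq_norm,
    show (WithLp.equiv 2 (Fin k → ℝ)).symm (t • v) =
      t • (WithLp.equiv 2 (Fin k → ℝ)).symm v from rfl, norm_smul, Real.norm_eq_abs]

lemma enorm_neg' {k : ℕ} (v : Fin k → ℝ) : enorm (-v) = enorm v := by simp [enorm]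

lemma enorm_sub_comm {k : ℕ} (a b : Fin k → ℝ) : enorm (a - b) = enorm (b - a) := by
  rw [← enorm_neg' (a - b)]; congr 1; abel

lemma enorm_mulVec_le_frob {a b : ℕ} (M : Matrix (Fin a) (Fin b) ℝ) {v : Fin b → ℝ}
    (hv : enorm v ≤ 1) :
    enorm (M.mulVec v) ≤ Real.sqrt (∑ i, ∑ j, M i j ^ 2) := by
  apply Real.sqrt_le_sqrt
  apply Finset.sum_le_sum
  intro i _
  have hcs := Finset.sum_mul_sq_le_sq_mul_sq Finset.univ (fun j => M i j) v
  have hv2 : ∑ j, v j ^ 2 ≤ 1 := by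
    calc ∑ j, v j ^ 2 = enorm v ^ 2 := (enorm_sq' v).symm
    _ ≤ 1 := by nlinarith [enorm_nonneg' v]
  calc (M.mulVec v i) ^ 2 = (∑ j, M i j * v j) ^ 2 := by rfl
  _ ≤ (∑ j, M i j ^ 2) * ∑ j, v j ^ 2 := hcs
  _ ≤ ∑ j, M i j ^ 2 := by
      nlinarith [Finset.sum_nonneg (fun j (_ : j ∈ Finset.univ) => sq_nonneg (M i j))]

lemma spec_bddAbove {a b : ℕ} (M : Matrix (Fin a) (Fin b) ℝ) :
    BddAbove (Set.range fun v : {v : Fin b → ℝ // enorm v ≤ 1} => enorm (M.mulVec v.1)) := by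
  refine ⟨Real.sqrt (∑ i, ∑ j, M i j ^ 2), ?_⟩
  rintro x ⟨v, rfl⟩
  exact enorm_mulVec_le_frob M v.2

lemma spec_nonneg {a b : ℕ} (M : Matrix (Fin a) (Fin b) ℝ) : 0 ≤ spec M :=
  Real.iSup_nonneg fun _ => enorm_nonneg' _

lemma enorm_mulVec_le {a b : ℕ} (M : Matrix (Fin a) (Fin b) ℝ) (v : Fin b → ℝ) :
    enorm (M.mulVec v) ≤ spec M * enorm v := by
  rcases eq_or_lt_of_le (enorm_nonneg' v) with h0 | h0
  · have hv : ∀ i, v i = 0 := by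
      intro i
      have hsq : ∑ j, v j ^ 2 = 0 := by
        have := enorm_sq' v; rw [← h0] at this; simpa using this.symm
      have := (Finset.sum_eq_zero_iff_of_nonneg (fun j _ => sq_nonneg (v j))).1 hsq i
        (Finset.mem_univ i)
      exact pow_eq_zero_iff (n := 2) (by norm_num) |>.1 this
    have : v = 0 := funext hv
    subst this
    simp [Matrix.mulVec_zero, enorm_zero']
  · set t := enorm v with ht
    have hw : enorm (t⁻¹ • v) ≤ 1 := by
      rw [enorm_smul', abs_of_pos (inv_pos.2 h0), inv_mul_cancel₀ h0.ne']
    have hle : enorm (M.mulVec (t⁻¹ • v)) ≤ spec M :=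
      le_ciSup_of_le (spec_bddAbove M) ⟨t⁻¹ • v, hw⟩ le_rfl
    have heq : enorm (M.mulVec (t⁻¹ • v)) = t⁻¹ * enorm (M.mulVec v) := by
      rw [Matrix.mulVec_smul, enorm_smul', abs_of_pos (inv_pos.2 h0)]
    rw [heq] at hle
    calc enorm (M.mulVec v) = t * (t⁻¹ * enorm (M.mulVec v)) := by field_simp
    _ ≤ t * spec M := by nlinarith
    _ = spec M * t := mul_comm _ _

lemma abs_le_vinf {k : ℕ} (v : Fin k → ℝ) (i : Fin k) : |v i| ≤ vinf v :=
  le_ciSup (f := fun i => |v i|) (Set.Finite.bddAbove (Set.finite_range _)) i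

lemma abs_mulVec_le {a b : ℕ} (M : Matrix (Fin a) (Fin b) ℝ) {x : Fin b → ℝ} {c : ℝ}
    (hx : ∀ k, |x k| ≤ c) (j : Fin a) :
    |(M.mulVec x) j| ≤ ∑ k, |M j k| * c := by
  calc |(M.mulVec x) j| = |∑ k, M j k * x k| := rfl
  _ ≤ ∑ k, |M j k * x k| := Finset.abs_sum_le_sum_abs _ _
  _ ≤ ∑ k, |M j k| * c := by
      apply Finset.sum_le_sum
      intro k _
      rw [abs_mul]
      exact mul_le_mul_of_nonneg_left (hx k) (abs_nonneg _)

lemma lamMin_le_rayleigh {k : ℕ} [NeZero k] (P : Matrix (Fin k) (Fin k) ℝ)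
    (hP : P.IsHermitian) (v : Fin k → ℝ) :
    lamMin P hP * (v ⬝ᵥ v) ≤ v ⬝ᵥ P.mulVec v := by
  set U : Matrix (Fin k) (Fin k) ℝ := (hP.eigenvectorUnitary : Matrix (Fin k) (Fin k) ℝ) with hU
  have hstar : star U = Uᵀ := by
    rw [Matrix.star_eq_conjTranspose]; ext i j; simp [Matrix.conjTranspose_apply]
  set w : Fin k → ℝ := Uᵀ.mulVec v with hw
  have hUU : U * Uᵀ = 1 := by
    rw [← hstar]
    exact Matrix.mem_unitaryGroup_iff.mp hP.eigenvectorUnitary.2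
  have hdot : ∀ x : Fin k → ℝ, v ⬝ᵥ U.mulVec x = w ⬝ᵥ x := by
    intro x
    rw [Matrix.dotProduct_mulVec, hw, ← Matrix.transpose_transpose U,
      Matrix.vecMul_transpose, Matrix.transpose_transpose]
  have hvw : v ⬝ᵥ v = w ⬝ᵥ w := by
    have h1 : U.mulVec w = v := by
      rw [hw, Matrix.mulVec_mulVec, hUU, Matrix.one_mulVec]
    calc v ⬝ᵥ v = v ⬝ᵥ U.mulVec w := by rw [h1]
    _ = w ⬝ᵥ w := hdot w
  have hsp := hP.spectral_theorem
  rw [RCLike.ofReal_real_eq_id, Unitary.conjStarAlgAut_apply, ← hU, hstar] at hsp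
  have hPv : P.mulVec v = U.mulVec ((Matrix.diagonal (id ∘ hP.eigenvalues)).mulVec w) := by
    rw [hw, Matrix.mulVec_mulVec, Matrix.mulVec_mulVec, ← hsp]
  have hmain : v ⬝ᵥ P.mulVec v = ∑ i, hP.eigenvalues i * w i ^ 2 := by
    rw [hPv, hdot]
    simp only [dotProduct, Matrix.mulVec_diagonal, Function.comp_apply, id_eq]
    apply Finset.sum_congr rfl
    intro i _
    ring
  rw [hmain, hvw]
  have hbdd : BddBelow (Set.range hP.eigenvalues) := Set.Finite.bddBelow (Set.finite_range _)
  have h1 : ∀ i, lamMin P hP * w i ^ 2 ≤ hP.eigenvalues i * w i ^ 2 := fun i =>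
    mul_le_mul_of_nonneg_right (ciInf_le hbdd i) (sq_nonneg _)
  calc lamMin P hP * (w ⬝ᵥ w) = ∑ i, lamMin P hP * w i ^ 2 := by
        simp [dotProduct, Finset.mul_sum, pow_two]
  _ ≤ ∑ i, hP.eigenvalues i * w i ^ 2 := Finset.sum_le_sum fun i _ => h1 i

lemma lamMin_pos {k : ℕ} [NeZero k] {P : Matrix (Fin k) (Fin k) ℝ} (hP : P.PosDef) :
    0 < lamMin P hP.1 := by
  have hne : (Set.range hP.1.eigenvalues).Nonempty := Set.range_nonempty _
  have hmem := hne.csInf_mem (Set.finite_range hP.1.eigenvalues)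
  obtain ⟨i, hi⟩ := hmem
  rw [lamMin, iInf, ← hi]
  exact hP.eigenvalues_pos i

lemma enorm_combo_le {k : ℕ} {x : Fin k → ℝ} {a b : ℝ} (ha : 0 ≤ a) (hb : 0 ≤ b)
    {u v : Fin k → ℝ} (hx : ∀ j, |x j| ≤ a * |u j| + b * |v j|) :
    enorm x ≤ a * enorm u + b * enorm v := by
  have h1 : enorm x ≤ enorm (a • (fun j => |u j|) + b • (fun j => |v j|)) :=
    enorm_mono (fun j => by simpa using hx j)
  calc enorm x ≤ enorm (a • (fun j => |u j|) + b • (fun j => |v j|)) := h1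
  _ ≤ enorm (a • (fun j => |u j|)) + enorm (b • (fun j => |v j|)) := enorm_add_le _ _
  _ = a * enorm u + b * enorm v := by
      rw [enorm_smul', enorm_smul', abs_of_nonneg ha, abs_of_nonneg hb,
        enorm_abs, enorm_abs]

lemma rowNorm3_nonneg {n m : ℕ} (s : ℝ) (A : Matrix (Fin n) (Fin m) ℝ)
    (B : Matrix (Fin n) (Fin n) ℝ) (v : Fin n → ℝ) : 0 ≤ rowNorm3 s A B v :=
  Real.iSup_nonneg fun i => by positivity

lemma arg3_bound {n m : ℕ} (W : Matrix (Fin n) (Fin m) ℝ) (Uu : Matrix (Fin n) (Fin n) ℝ)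
    (b : Fin n → ℝ) {u : Fin m → ℝ} {hh : Fin n → ℝ} {umax : ℝ} (hum : 0 < umax)
    (hu : vinf u ≤ umax) (hhh : vinf hh ≤ 1) (j : Fin n) :
    |(W.mulVec u + Uu.mulVec hh + b) j| ≤ rowNorm3 umax W Uu b := by
  have h1 : |(W.mulVec u) j| ≤ ∑ k, |W j k| * umax :=
    abs_mulVec_le W (fun k => (abs_le_vinf u k).trans hu) j
  have h2 : |(Uu.mulVec hh) j| ≤ ∑ k, |Uu j k| * 1 :=
    abs_mulVec_le Uu (fun k => (abs_le_vinf hh k).trans hhh) j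
  have h3 : (∑ k, |W j k| * umax) = ∑ k, |umax * W j k| := by
    apply Finset.sum_congr rfl
    intro k _
    rw [abs_mul, abs_of_pos hum, mul_comm]
  have hle : |(W.mulVec u + Uu.mulVec hh + b) j| ≤
      ∑ k, |umax * W j k| + ∑ k, |Uu j k| + |b j| := by
    have := abs_add_le (W.mulVec u j + Uu.mulVec hh j) (b j)
    have h4 := abs_add_le (W.mulVec u j) (Uu.mulVec hh j)
    simp only [Pi.add_apply]
    rw [← h3]
    simp only [mul_one] at h2
    calc |W.mulVec u j + Uu.mulVec hh j + b j| ≤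
        |W.mulVec u j + Uu.mulVec hh j| + |b j| := abs_add_le _ _
    _ ≤ |W.mulVec u j| + |Uu.mulVec hh j| + |b j| := by linarith
    _ ≤ ∑ k, |W j k| * umax + ∑ k, |Uu j k| + |b j| := by
        linarith
  exact hle.trans (le_ciSup (f := fun i => ∑ k, |umax * W i k| + ∑ k, |Uu i k| + |b i|)
    (Set.Finite.bddAbove (Set.finite_range _)) j)

lemma arg5_bound {n m p : ℕ} (W : Matrix (Fin n) (Fin m) ℝ) (Uu : Matrix (Fin n) (Fin n) ℝ)
    (b : Fin n → ℝ) (L : Matrix (Fin n) (Fin p) ℝ) (Wy : Matrix (Fin p) (Fin n) ℝ)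
    {u : Fin m → ℝ} {hh h : Fin n → ℝ} {d dh : Fin p → ℝ} {umax dmax : ℝ}
    (hum : 0 < umax) (hdm : 0 < dmax) (hu : vinf u ≤ umax) (hhh : vinf hh ≤ 1)
    (hho : vinf h ≤ 1) (hd : vinf d ≤ dmax) (hdh : vinf dh ≤ dmax) (j : Fin n) :
    |(W.mulVec u + Uu.mulVec hh + b + L.mulVec (Wy.mulVec (h - hh) + (d - dh))) j| ≤
      rowNorm5 umax W (Uu - L * Wy) b (L * Wy) (2 * dmax) L := by
  have hsplit : (W.mulVec u + Uu.mulVec hh + b + L.mulVec (Wy.mulVec (h - hh) + (d - dh))) j =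
      (W.mulVec u) j + ((Uu - L * Wy).mulVec hh) j + b j + (((L * Wy)).mulVec h) j +
        (L.mulVec (d - dh)) j := by
    simp only [Pi.add_apply, Matrix.sub_mulVec, Pi.sub_apply, Matrix.mulVec_add,
      Matrix.mulVec_sub, ← Matrix.mulVec_mulVec]
    ring
  have h1 : |(W.mulVec u) j| ≤ ∑ k, |umax * W j k| := by
    have := abs_mulVec_le W (fun k => (abs_le_vinf u k).trans hu) j
    calc |(W.mulVec u) j| ≤ ∑ k, |W j k| * umax := this
    _ = ∑ k, |umax * W j k| := by
        apply Finset.sum_congr rfl; intro k _; rw [abs_mul, abs_of_pos hum, mul_comm]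
  have h2 : |((Uu - L * Wy).mulVec hh) j| ≤ ∑ k, |(Uu - L * Wy) j k| := by
    have := abs_mulVec_le (Uu - L * Wy) (fun k => (abs_le_vinf hh k).trans hhh) j
    simpa using this
  have h4 : |((L * Wy).mulVec h) j| ≤ ∑ k, |(L * Wy) j k| := by
    have := abs_mulVec_le (L * Wy) (fun k => (abs_le_vinf h k).trans hho) j
    simpa using this
  have h5 : |(L.mulVec (d - dh)) j| ≤ ∑ k, |2 * dmax * L j k| := by
    have hdd : ∀ k, |(d - dh) k| ≤ 2 * dmax := by
      intro k
      have := abs_sub (d k) (dh k)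
      have ha := (abs_le_vinf d k).trans hd
      have hb := (abs_le_vinf dh k).trans hdh
      calc |(d - dh) k| = |d k - dh k| := rfl
      _ ≤ |d k| + |dh k| := abs_sub _ _
      _ ≤ 2 * dmax := by linarith
    have := abs_mulVec_le L hdd j
    calc |(L.mulVec (d - dh)) j| ≤ ∑ k, |L j k| * (2 * dmax) := this
    _ = ∑ k, |2 * dmax * L j k| := by
        apply Finset.sum_congr rfl; intro k _
        rw [abs_mul, abs_of_pos (by linarith : (0:ℝ) < 2 * dmax), mul_comm]
  have hle : |(W.mulVec u + Uu.mulVec hh + b + L.mulVec (Wy.mulVec (h - hh) + (d - dh))) j| ≤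
      ∑ k, |umax * W j k| + ∑ k, |(Uu - L * Wy) j k| + |b j| + ∑ k, |(L * Wy) j k| +
        ∑ k, |2 * dmax * L j k| := by
    rw [hsplit]
    have t1 := abs_add_le ((W.mulVec u) j + ((Uu - L * Wy).mulVec hh) j + b j +
      ((L * Wy).mulVec h) j) ((L.mulVec (d - dh)) j)
    have t2 := abs_add_le ((W.mulVec u) j + ((Uu - L * Wy).mulVec hh) j + b j)
      (((L * Wy)).mulVec h j)
    have t3 := abs_add_le ((W.mulVec u) j + ((Uu - L * Wy).mulVec hh) j) (b j)
    have t4 := abs_add_le ((W.mulVec u) j) (((Uu - L * Wy).mulVec hh) j)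
    linarith
  exact hle.trans (le_ciSup
    (f := fun i => ∑ k, |umax * W i k| + ∑ k, |(Uu - L * Wy) i k| + |b i| +
      ∑ k, |(L * Wy) i k| + ∑ k, |2 * dmax * L i k|)
    (Set.Finite.bddAbove (Set.finite_range _)) j)

lemma enorm_innov {k n p : ℕ} (M : Matrix (Fin k) (Fin p) ℝ) (Wy : Matrix (Fin p) (Fin n) ℝ)
    (h hh : Fin n → ℝ) (d dh : Fin p → ℝ) :
    enorm (M.mulVec (Wy.mulVec (h - hh) + (d - dh))) ≤
      spec (M * Wy) * enorm (hh - h) + spec M * enorm (dh - d) := by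
  rw [Matrix.mulVec_add, Matrix.mulVec_mulVec]
  calc enorm ((M * Wy).mulVec (h - hh) + M.mulVec (d - dh)) ≤
      enorm ((M * Wy).mulVec (h - hh)) + enorm (M.mulVec (d - dh)) := enorm_add_le _ _
  _ ≤ spec (M * Wy) * enorm (h - hh) + spec M * enorm (d - dh) :=
      add_le_add (enorm_mulVec_le _ _) (enorm_mulVec_le _ _)
  _ = spec (M * Wy) * enorm (hh - h) + spec M * enorm (dh - d) := by
      rw [enorm_sub_comm h hh, enorm_sub_comm d dh]

lemma sat_sub_le {x d dmax : ℝ} (hd : |d| ≤ dmax) :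
    |min (max x (-dmax)) dmax - d| ≤ |x - d| := by
  have hd1 := abs_le.1 hd
  have hdm : 0 ≤ dmax := (abs_nonneg d).trans hd
  rcases le_total x (-dmax) with h1 | h1
  · rw [max_eq_right h1, min_eq_left (by linarith)]
    rw [abs_of_nonpos (by linarith), abs_of_nonpos (by linarith)]
    linarith
  · rcases le_total x dmax with h2 | h2
    · rw [max_eq_left h1, min_eq_left h2]
    · rw [max_eq_left h1, min_eq_right h2]
      rw [abs_of_nonneg (by linarith), abs_of_nonneg (by linarith)]
      linarith

end Aux

/-- bound on the deviation of the observer update from the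
augmented model update (property (26d), with `L_max = ‖L‖/√λ_min(P_o)`). -/
theorem statement10 {n m p : ℕ} (S : LSTM n m p) (G : Gains n p) (umax dmax : ℝ)
    (hu : 0 < umax) (hd : 0 < dmax)
    (hrho : specRad (Ad S G umax dmax) < 1)
    (Qo Po : Matrix (Fin 3) (Fin 3) ℝ) (hQo : Qo.PosDef) (hPo : Po.PosDef)
    (hlyap : (Ad S G umax dmax)ᵀ * Po * (Ad S G umax dmax) - Po = -Qo) :
    ∀ u ∈ setU m umax, ∀ c h : Fin n → ℝ, (c, h) ∈ setX S umax →
      ∀ d ∈ setD p dmax, ∀ χh ∈ setIhat S G umax dmax,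
      ∀ y : Fin p → ℝ, y = S.Wy.mulVec h + S.bY + d →
        chinorm (obsStep S G dmax u y χh - faug S χh u) ≤
          (spec (Lmat S G umax dmax) / Real.sqrt (lamMin Po hPo.1)) *
            Vo Po χh (c, h, d) := by
  intro u huU c h hx d hdD χh hχ y hy
  obtain ⟨ch, hh, dh⟩ := χh
  have hcv : vinf c ≤ sIb S umax * sCb S umax / (1 - sFb S umax) := hx.1
  have hhv : vinf h ≤ 1 := hx.2
  have huv : vinf u ≤ umax := huU
  have hdv : vinf d ≤ dmax := hdD
  have hch : vinf ch ≤ sIh S G umax dmax * sCb S umax / (1 - sFh S G umax dmax) := hχ.1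
  have hhh : vinf hh ≤ 1 := hχ.2.1
  have hdhv : vinf dh ≤ dmax := hχ.2.2
  set cbh := sIh S G umax dmax * sCb S umax / (1 - sFh S G umax dmax) with hcbh_def
  have hsCb0 : 0 ≤ sCb S umax := tanh_nonneg' (rowNorm3_nonneg _ _ _ _)
  have hsFh1 : sFh S G umax dmax < 1 := sigmoid_lt_one' _
  have hsFh0 : 0 < sFh S G umax dmax := sigmoid_pos' _
  have hsIh0 : 0 < sIh S G umax dmax := sigmoid_pos' _
  have hsOb0 : 0 < sOb S umax := sigmoid_pos' _
  have hsOb1 : sOb S umax < 1 := sigmoid_lt_one' _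
  have hcbh0 : 0 ≤ cbh := by
    rw [hcbh_def]
    apply div_nonneg (mul_nonneg hsIh0.le hsCb0)
    linarith
  have hδ : y - yhat S hh dh = S.Wy.mulVec (h - hh) + (d - dh) := by
    rw [hy]; unfold yhat; rw [Matrix.mulVec_sub]; abel
  set e1 := enorm (ch - c) with he1
  set e2 := enorm (hh - h) with he2
  set e3 := enorm (dh - d) with he3
  have he2n : 0 ≤ e2 := enorm_nonneg' _
  have he3n : 0 ≤ e3 := enorm_nonneg' _
  set δf := G.Lf.mulVec (y - yhat S hh dh) with hδf
  set δi := G.Li.mulVec (y - yhat S hh dh) with hδi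
  set δo := G.Lo.mulVec (y - yhat S hh dh) with hδo
  set Af := S.Wf.mulVec u + S.Uf.mulVec hh + S.bf with hAf
  set Ai := S.Wi.mulVec u + S.Ui.mulVec hh + S.bi with hAi
  set Ao := S.Wo.mulVec u + S.Uo.mulVec hh + S.bo with hAo
  set Ac := S.Wc.mulVec u + S.Uc.mulVec hh + S.bc with hAc
  -- δ norms
  have hδf_n : enorm δf ≤ spec (G.Lf * S.Wy) * e2 + spec G.Lf * e3 := by
    rw [hδf, hδ, he2, he3]; exact enorm_innov _ _ _ _ _ _
  have hδi_n : enorm δi ≤ spec (G.Li * S.Wy) * e2 + spec G.Li * e3 := by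
    rw [hδi, hδ, he2, he3]; exact enorm_innov _ _ _ _ _ _
  have hδo_n : enorm δo ≤ spec (G.Lo * S.Wy) * e2 + spec G.Lo * e3 := by
    rw [hδo, hδ, he2, he3]; exact enorm_innov _ _ _ _ _ _
  -- component differences
  set Dc : Fin n → ℝ := fun j => obsC S G u y ch hh dh j - stepC S u ch hh j with hDc
  set Dh : Fin n → ℝ := fun j => obsH S G u y ch hh dh j - stepH S u ch hh j with hDh
  set Dd : Fin p → ℝ := fun j => obsD S G dmax y hh dh j - dh j with hDd
  have htanhAc : ∀ j, |Real.tanh (Ac j)| ≤ sCb S umax := fun j =>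
    abs_tanh_le (by rw [hAc]; exact arg3_bound S.Wc S.Uc S.bc hu huv hhh j)
  -- Dc pointwise
  have hDc_pt : ∀ j, |Dc j| ≤ ((1/4) * cbh) * |δf j| + ((1/4) * sCb S umax) * |δi j| := by
    intro j
    have hsplit : Dc j =
        (sigmoid ((Af + δf) j) - sigmoid (Af j)) * ch j +
        (sigmoid ((Ai + δi) j) - sigmoid (Ai j)) * Real.tanh (Ac j) := by
      rw [hDc]
      simp only [obsC, stepC, hAf, hAi, hAc, hδf, hδi]
      ring
    rw [hsplit]
    have hb1 : |sigmoid ((Af + δf) j) - sigmoid (Af j)| ≤ (1/4) * |δf j| := by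
      have := sigmoid_lipschitz ((Af + δf) j) (Af j)
      simpa [Pi.add_apply, add_sub_cancel_left] using this
    have hb2 : |ch j| ≤ cbh := (abs_le_vinf ch j).trans hch
    have hb3 : |sigmoid ((Ai + δi) j) - sigmoid (Ai j)| ≤ (1/4) * |δi j| := by
      have := sigmoid_lipschitz ((Ai + δi) j) (Ai j)
      simpa [Pi.add_apply, add_sub_cancel_left] using this
    have hb4 := htanhAc j
    have habs : |(sigmoid ((Af + δf) j) - sigmoid (Af j)) * ch j +
        (sigmoid ((Ai + δi) j) - sigmoid (Ai j)) * Real.tanh (Ac j)| ≤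
        |sigmoid ((Af + δf) j) - sigmoid (Af j)| * |ch j| +
        |sigmoid ((Ai + δi) j) - sigmoid (Ai j)| * |Real.tanh (Ac j)| :=
      (abs_add_le _ _).trans (by rw [abs_mul, abs_mul])
    have m1 : |sigmoid ((Af + δf) j) - sigmoid (Af j)| * |ch j| ≤ ((1/4) * |δf j|) * cbh :=
      mul_le_mul hb1 hb2 (abs_nonneg _) (by positivity)
    have m2 : |sigmoid ((Ai + δi) j) - sigmoid (Ai j)| * |Real.tanh (Ac j)| ≤
        ((1/4) * |δi j|) * sCb S umax :=
      mul_le_mul hb3 hb4 (abs_nonneg _) (by positivity)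
    linarith [habs, m1, m2]
  have hDc_norm : enorm Dc ≤ ((1/4) * cbh) * enorm δf + ((1/4) * sCb S umax) * enorm δi :=
    enorm_combo_le (mul_nonneg (by norm_num) hcbh0) (mul_nonneg (by norm_num) hsCb0) hDc_pt
  -- observer cell-state bound
  have hobsC : ∀ j, |obsC S G u y ch hh dh j| ≤ cbh := by
    intro j
    have hs1 : sigmoid ((Af + δf) j) ≤ sFh S G umax dmax := by
      apply sigmoid_abs_le
      rw [hAf, hδf, hδ]
      exact arg5_bound S.Wf S.Uf S.bf G.Lf S.Wy hu hd huv hhh hhv hdv hdhv j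
    have hs2 : sigmoid ((Ai + δi) j) ≤ sIh S G umax dmax := by
      apply sigmoid_abs_le
      rw [hAi, hδi, hδ]
      exact arg5_bound S.Wi S.Ui S.bi G.Li S.Wy hu hd huv hhh hhv hdv hdhv j
    have hb2 : |ch j| ≤ cbh := (abs_le_vinf ch j).trans hch
    have hb4 := htanhAc j
    have hval : obsC S G u y ch hh dh j =
        sigmoid ((Af + δf) j) * ch j + sigmoid ((Ai + δi) j) * Real.tanh (Ac j) := by
      simp only [obsC, hAf, hAi, hAc, hδf, hδi]
    have heq : sFh S G umax dmax * cbh + sIh S G umax dmax * sCb S umax = cbh := by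
      have hne : (1:ℝ) - sFh S G umax dmax ≠ 0 := by linarith
      rw [hcbh_def]
      field_simp
      ring
    rw [hval]
    have hp1 : 0 < sigmoid ((Af + δf) j) := sigmoid_pos' _
    have hp2 : 0 < sigmoid ((Ai + δi) j) := sigmoid_pos' _
    calc |sigmoid ((Af + δf) j) * ch j + sigmoid ((Ai + δi) j) * Real.tanh (Ac j)| ≤
        sigmoid ((Af + δf) j) * |ch j| + sigmoid ((Ai + δi) j) * |Real.tanh (Ac j)| := by
          refine (abs_add_le _ _).trans ?_
          rw [abs_mul, abs_mul, abs_of_pos hp1, abs_of_pos hp2]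
    _ ≤ sFh S G umax dmax * cbh + sIh S G umax dmax * sCb S umax :=
          add_le_add (mul_le_mul hs1 hb2 (abs_nonneg _) hsFh0.le)
            (mul_le_mul hs2 hb4 (abs_nonneg _) hsIh0.le)
    _ = cbh := heq
  -- Dh pointwise
  have hDh_pt : ∀ j, |Dh j| ≤ ((1/4) * Real.tanh cbh) * |δo j| + sOb S umax * |Dc j| := by
    intro j
    have hsplit : Dh j =
        (sigmoid ((Ao + δo) j) - sigmoid (Ao j)) * Real.tanh (obsC S G u y ch hh dh j) +
        sigmoid (Ao j) *
          (Real.tanh (obsC S G u y ch hh dh j) - Real.tanh (stepC S u ch hh j)) := by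
      rw [hDh]
      simp only [obsH, stepH, hAo, hδo]
      ring
    rw [hsplit]
    have hb1 : |sigmoid ((Ao + δo) j) - sigmoid (Ao j)| ≤ (1/4) * |δo j| := by
      have := sigmoid_lipschitz ((Ao + δo) j) (Ao j)
      simpa [Pi.add_apply, add_sub_cancel_left] using this
    have hb2 : |Real.tanh (obsC S G u y ch hh dh j)| ≤ Real.tanh cbh :=
      abs_tanh_le (hobsC j)
    have hb3 : sigmoid (Ao j) ≤ sOb S umax :=
      sigmoid_abs_le (by rw [hAo]; exact arg3_bound S.Wo S.Uo S.bo hu huv hhh j)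
    have hb4 : |Real.tanh (obsC S G u y ch hh dh j) - Real.tanh (stepC S u ch hh j)| ≤
        |Dc j| := by
      have := tanh_lipschitz (obsC S G u y ch hh dh j) (stepC S u ch hh j)
      rw [hDc]
      exact this
    have hp : 0 < sigmoid (Ao j) := sigmoid_pos' _
    have habs : |(sigmoid ((Ao + δo) j) - sigmoid (Ao j)) *
          Real.tanh (obsC S G u y ch hh dh j) +
        sigmoid (Ao j) *
          (Real.tanh (obsC S G u y ch hh dh j) - Real.tanh (stepC S u ch hh j))| ≤
        |sigmoid ((Ao + δo) j) - sigmoid (Ao j)| * |Real.tanh (obsC S G u y ch hh dh j)| +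
        sigmoid (Ao j) *
          |Real.tanh (obsC S G u y ch hh dh j) - Real.tanh (stepC S u ch hh j)| :=
      (abs_add_le _ _).trans (by rw [abs_mul, abs_mul, abs_of_pos hp])
    have htnn : 0 ≤ Real.tanh cbh := tanh_nonneg' hcbh0
    have m1 : |sigmoid ((Ao + δo) j) - sigmoid (Ao j)| *
        |Real.tanh (obsC S G u y ch hh dh j)| ≤ ((1/4) * |δo j|) * Real.tanh cbh :=
      mul_le_mul hb1 hb2 (abs_nonneg _) (by positivity)
    have m2 : sigmoid (Ao j) *
        |Real.tanh (obsC S G u y ch hh dh j) - Real.tanh (stepC S u ch hh j)| ≤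
        sOb S umax * |Dc j| :=
      mul_le_mul hb3 hb4 (abs_nonneg _) hsOb0.le
    linarith [habs, m1, m2]
  have hDh_norm : enorm Dh ≤ ((1/4) * Real.tanh cbh) * enorm δo + sOb S umax * enorm Dc :=
    enorm_combo_le (mul_nonneg (by norm_num) (tanh_nonneg' hcbh0)) hsOb0.le hDh_pt
  -- Dd bound
  have hDd_norm : enorm Dd ≤ spec (G.Ld * S.Wy) * e2 + spec G.Ld * e3 := by
    have h1 : enorm Dd ≤ enorm (G.Ld.mulVec (y - yhat S hh dh)) := by
      rw [← enorm_abs (G.Ld.mulVec (y - yhat S hh dh))]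
      apply enorm_mono
      intro j
      have hdj : |dh j| ≤ dmax := (abs_le_vinf dh j).trans hdhv
      have hs := sat_sub_le (x := (dh + G.Ld.mulVec (y - yhat S hh dh)) j) (d := dh j) hdj
      rw [hDd]
      simpa [obsD, sat, Pi.add_apply, add_sub_cancel_left] using hs
    refine h1.trans ?_
    rw [hδ, he2, he3]
    exact enorm_innov _ _ _ _ _ _
  -- row bounds
  have hr0 : enorm Dc ≤ alphaBar S G umax dmax * e2 + betaBar S G umax dmax * e3 := by
    have h1 : enorm Dc ≤
        ((1/4) * cbh) * (spec (G.Lf * S.Wy) * e2 + spec G.Lf * e3) +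
        ((1/4) * sCb S umax) * (spec (G.Li * S.Wy) * e2 + spec G.Li * e3) :=
      hDc_norm.trans (add_le_add
        (mul_le_mul_of_nonneg_left hδf_n (mul_nonneg (by norm_num) hcbh0))
        (mul_le_mul_of_nonneg_left hδi_n (mul_nonneg (by norm_num) hsCb0)))
    refine h1.trans (le_of_eq ?_)
    simp only [alphaBar, betaBar, hcbh_def]
    ring
  have hr1 : enorm Dh ≤
      (gammaBar S G umax dmax * spec (G.Lo * S.Wy) + sOb S umax * alphaBar S G umax dmax) * e2 +
      (gammaBar S G umax dmax * spec G.Lo + sOb S umax * betaBar S G umax dmax) * e3 := by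
    have h1 : enorm Dh ≤
        ((1/4) * Real.tanh cbh) * (spec (G.Lo * S.Wy) * e2 + spec G.Lo * e3) +
        sOb S umax * (alphaBar S G umax dmax * e2 + betaBar S G umax dmax * e3) :=
      hDh_norm.trans (add_le_add
        (mul_le_mul_of_nonneg_left hδo_n (mul_nonneg (by norm_num) (tanh_nonneg' hcbh0)))
        (mul_le_mul_of_nonneg_left hr0 hsOb0.le))
    refine h1.trans (le_of_eq ?_)
    simp only [gammaBar, hcbh_def]
    ring
  -- nonnegativity of alphaBar/betaBar
  have hαB : 0 ≤ alphaBar S G umax dmax := by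
    have e : alphaBar S G umax dmax = (1/4) * cbh * spec (G.Lf * S.Wy) +
        (1/4) * sCb S umax * spec (G.Li * S.Wy) := by
      rw [hcbh_def]; rfl
    rw [e]
    exact add_nonneg (mul_nonneg (mul_nonneg (by norm_num) hcbh0) (spec_nonneg _))
      (mul_nonneg (mul_nonneg (by norm_num) hsCb0) (spec_nonneg _))
  have hβB : 0 ≤ betaBar S G umax dmax := by
    have e : betaBar S G umax dmax = (1/4) * cbh * spec G.Lf +
        (1/4) * sCb S umax * spec G.Li := by
      rw [hcbh_def]; rfl
    rw [e]
    exact add_nonneg (mul_nonneg (mul_nonneg (by norm_num) hcbh0) (spec_nonneg _))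
      (mul_nonneg (mul_nonneg (by norm_num) hsCb0) (spec_nonneg _))
  have hγB : 0 ≤ gammaBar S G umax dmax := by
    have e : gammaBar S G umax dmax = (1/4) * Real.tanh cbh := by
      rw [hcbh_def]; rfl
    rw [e]
    exact mul_nonneg (by norm_num) (tanh_nonneg' hcbh0)
  -- assemble
  set E : Fin 3 → ℝ := ![e1, e2, e3] with hE
  set r0 : ℝ := alphaBar S G umax dmax * e2 + betaBar S G umax dmax * e3 with hr0d
  set r1 : ℝ :=
      (gammaBar S G umax dmax * spec (G.Lo * S.Wy) + sOb S umax * alphaBar S G umax dmax) * e2 +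
      (gammaBar S G umax dmax * spec G.Lo + sOb S umax * betaBar S G umax dmax) * e3 with hr1d
  set r2 : ℝ := spec (G.Ld * S.Wy) * e2 + spec G.Ld * e3 with hr2d
  have hr0n : 0 ≤ r0 := by
    rw [hr0d]
    exact add_nonneg (mul_nonneg hαB he2n) (mul_nonneg hβB he3n)
  have hr1n : 0 ≤ r1 := by
    rw [hr1d]
    exact add_nonneg
      (mul_nonneg (add_nonneg (mul_nonneg hγB (spec_nonneg _)) (mul_nonneg hsOb0.le hαB)) he2n)
      (mul_nonneg (add_nonneg (mul_nonneg hγB (spec_nonneg _)) (mul_nonneg hsOb0.le hβB)) he3n)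
  have hr2n : 0 ≤ r2 := by
    rw [hr2d]
    exact add_nonneg (mul_nonneg (spec_nonneg _) he2n) (mul_nonneg (spec_nonneg _) he3n)
  have hmv : (Lmat S G umax dmax).mulVec E = ![r0, r1, r2] := by
    funext i
    fin_cases i <;>
      simp [Lmat, Matrix.mulVec, dotProduct, Fin.sum_univ_three, hE, hr0d, hr1d, hr2d] <;>
      ring
  have hLHS : chinorm (obsStep S G dmax u y (ch, hh, dh) - faug S (ch, hh, dh) u) =
      Real.sqrt (enorm Dc ^ 2 + enorm Dh ^ 2 + enorm Dd ^ 2) := by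
    rw [enorm_sq', enorm_sq', enorm_sq']
    simp only [hDc, hDh, hDd]
    rfl
  have hstep1 : Real.sqrt (enorm Dc ^ 2 + enorm Dh ^ 2 + enorm Dd ^ 2) ≤
      Real.sqrt (r0 ^ 2 + r1 ^ 2 + r2 ^ 2) := by
    apply Real.sqrt_le_sqrt
    have b0 : enorm Dc ^ 2 ≤ r0 ^ 2 := pow_le_pow_left₀ (enorm_nonneg' Dc) hr0 2
    have b1 : enorm Dh ^ 2 ≤ r1 ^ 2 := pow_le_pow_left₀ (enorm_nonneg' Dh) hr1 2
    have b2 : enorm Dd ^ 2 ≤ r2 ^ 2 := pow_le_pow_left₀ (enorm_nonneg' Dd) hDd_norm 2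
    linarith
  have hstep2 : Real.sqrt (r0 ^ 2 + r1 ^ 2 + r2 ^ 2) = enorm ![r0, r1, r2] := by
    rw [enorm, Fin.sum_univ_three]
    simp
  have hstep3 : enorm ![r0, r1, r2] ≤ spec (Lmat S G umax dmax) * enorm E := by
    rw [← hmv]
    exact enorm_mulVec_le _ _
  -- Lyapunov lower bound
  have hlam := lamMin_pos hPo
  have hsq : 0 < Real.sqrt (lamMin Po hPo.1) := Real.sqrt_pos.2 hlam
  have hVoE : Real.sqrt (lamMin Po hPo.1) * enorm E ≤ Vo Po (ch, hh, dh) (c, h, d) := by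
    have hEE : E ⬝ᵥ E = enorm E ^ 2 := by
      rw [enorm_sq']
      simp [dotProduct, pow_two]
    have hray := lamMin_le_rayleigh Po hPo.1 E
    have hmono : Real.sqrt (lamMin Po hPo.1 * (E ⬝ᵥ E)) ≤
        Real.sqrt (E ⬝ᵥ Po.mulVec E) := Real.sqrt_le_sqrt hray
    rw [Real.sqrt_mul hlam.le, hEE, Real.sqrt_sq (enorm_nonneg' _)] at hmono
    have hVeq : Vo Po (ch, hh, dh) (c, h, d) = Real.sqrt (E ⬝ᵥ Po.mulVec E) := by
      rw [Vo, wnorm, hE, he1, he2, he3]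
    rw [hVeq]
    exact hmono
  have hEdiv : enorm E ≤ Vo Po (ch, hh, dh) (c, h, d) / Real.sqrt (lamMin Po hPo.1) := by
    rw [le_div_iff₀ hsq]
    linarith [hVoE]
  calc chinorm (obsStep S G dmax u y (ch, hh, dh) - faug S (ch, hh, dh) u) =
      Real.sqrt (enorm Dc ^ 2 + enorm Dh ^ 2 + enorm Dd ^ 2) := hLHS
  _ ≤ Real.sqrt (r0 ^ 2 + r1 ^ 2 + r2 ^ 2) := hstep1
  _ = enorm ![r0, r1, r2] := hstep2
  _ ≤ spec (Lmat S G umax dmax) * enorm E := hstep3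
  _ ≤ spec (Lmat S G umax dmax) *
      (Vo Po (ch, hh, dh) (c, h, d) / Real.sqrt (lamMin Po hPo.1)) :=
    mul_le_mul_of_nonneg_left hEdiv (spec_nonneg _)
  _ = (spec (Lmat S G umax dmax) / Real.sqrt (lamMin Po hPo.1)) *
      Vo Po (ch, hh, dh) (c, h, d) := by ring

end LSTMmpc
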